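/- (Proposition 2) If the displacement block K = [[K_NN, K_NM, K_NS], [K_MN, K_MM, 0], [K_SN, 0, K_SS]] (block order N, M, S) is positive semidefinite and the saddle point matrix A is invertible, then the condensed matrix Â is symmetric positive definite. -/

import Mathlib

open Matrix

/-- **Proposition 2.** If the displacement block `K` is positive semidefinite and
the saddle point matrix `A` is invertible, then the condensed matrix `Â` is
symmetric positive definite. -/
theorem condensed_matrix_posDef
    (nN nM nS : ℕ)
    (K_NN : Matrix (Fin nN) (Fin nN) ℝ) (K_MM : Matrix (Fin nM) (Fin nM) ℝ)
    (K_SS : Matrix (Fin nS) (Fin nS) ℝ)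
    (K_NM : Matrix (Fin nN) (Fin nM) ℝ) (K_NS : Matrix (Fin nN) (Fin nS) ℝ)
    (hNN : K_NN.IsSymm) (hMM : K_MM.IsSymm) (hSS : K_SS.IsSymm)
    (D : Matrix (Fin nS) (Fin nS) ℝ) (M : Matrix (Fin nS) (Fin nM) ℝ)
    (hD : IsUnit D.det)
    (P : Matrix (Fin nS) (Fin nM) ℝ) (hP : P = D⁻¹ * M)
    -- the displacement block K, block order N, M, S
    (K : Matrix (Fin nN ⊕ (Fin nM ⊕ Fin nS)) (Fin nN ⊕ (Fin nM ⊕ Fin nS)) ℝ)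
    (hK : K = fromBlocks
      K_NN (fromCols K_NM K_NS)
      (fromRows K_NMᵀ K_NSᵀ) (fromBlocks K_MM 0 0 K_SS))
    (hKpsd : K.PosSemidef)
    -- the saddle point matrix, block order N, M, S, λ
    (A : Matrix ((Fin nN ⊕ Fin nM) ⊕ (Fin nS ⊕ Fin nS))
                ((Fin nN ⊕ Fin nM) ⊕ (Fin nS ⊕ Fin nS)) ℝ)
    (hA : A = fromBlocks
      (fromBlocks K_NN K_NM K_NMᵀ K_MM)
      (fromBlocks K_NS 0 0 (-Mᵀ))
      (fromBlocks K_NSᵀ 0 0 (-M))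
      (fromBlocks K_SS Dᵀ D 0))
    -- the condensed matrix
    (Ahat : Matrix (Fin nN ⊕ Fin nM) (Fin nN ⊕ Fin nM) ℝ)
    (hAhat : Ahat = fromBlocks
      K_NN (K_NM + K_NS * P)
      (K_NMᵀ + Pᵀ * K_NSᵀ) (K_MM + Pᵀ * K_SS * P))
    (hAinv : IsUnit A.det) :
    Ahat.PosDef := by
  set B : Matrix (Fin nN ⊕ (Fin nM ⊕ Fin nS)) (Fin nN ⊕ Fin nM) ℝ :=
    fromBlocks 1 0 0 (fromRows 1 P) with hB
  have hBH : Bᴴ = fromBlocks 1 0 0 (fromCols 1 Pᵀ) := by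
    rw [conjTranspose_eq_transpose_of_trivial, hB]
    simp [fromBlocks_transpose, transpose_fromRows]
  have hfact : Ahat = Bᴴ * K * B := by
    rw [hBH, hK, hAhat, hB]
    rw [fromBlocks_multiply, fromBlocks_multiply]
    simp [fromCols_mul_fromBlocks, fromBlocks_mul_fromRows,
      fromCols_mul_fromRows, mul_fromCols, fromRows_mul, Matrix.mul_assoc]
  have hpsd : Ahat.PosSemidef := hfact ▸ hKpsd.conjTranspose_mul_mul_same B
  refine posDef_iff_dotProduct_mulVec.mpr ⟨hpsd.isHermitian, fun x hx => ?_⟩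
  rcases (hpsd.dotProduct_mulVec_nonneg x).lt_or_eq with h | h
  · exact h
  exfalso
  -- the quadratic form vanishes, so K *ᵥ (B *ᵥ x) = 0
  have key : star (B *ᵥ x) ⬝ᵥ K *ᵥ (B *ᵥ x) = star x ⬝ᵥ Ahat *ᵥ x := by
    rw [hfact]
    simp only [star_mulVec, dotProduct_mulVec, vecMul_vecMul, mulVec_mulVec, Matrix.mul_assoc]
  have hKz : K *ᵥ (B *ᵥ x) = 0 :=
    (hKpsd.dotProduct_mulVec_zero_iff _).mp (by rw [key, ← h])
  set xN : Fin nN → ℝ := x ∘ Sum.inl with hxN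
  set xM : Fin nM → ℝ := x ∘ Sum.inr with hxM
  have hxe : x = Sum.elim xN xM := by funext i; cases i <;> rfl
  have hBx : B *ᵥ x = Sum.elim xN (Sum.elim xM (P *ᵥ xM)) := by
    rw [hxe, hB]
    simp [fromBlocks_mulVec, fromRows_mulVec]
  rw [hBx, hK] at hKz
  simp only [fromBlocks_mulVec, fromCols_mulVec_sumElim, fromRows_mulVec] at hKz
  have e1 : K_NN *ᵥ xN + (K_NM *ᵥ xM + K_NS *ᵥ (P *ᵥ xM)) = 0 := by
    funext i; simpa using congrFun hKz (Sum.inl i)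
  have e2 : K_NMᵀ *ᵥ xN + K_MM *ᵥ xM = 0 := by
    funext i; simpa using congrFun hKz (Sum.inr (Sum.inl i))
  have e3 : K_NSᵀ *ᵥ xN + K_SS *ᵥ (P *ᵥ xM) = 0 := by
    funext i; simpa using congrFun hKz (Sum.inr (Sum.inr i))
  have e4 : D *ᵥ (P *ᵥ xM) = M *ᵥ xM := by
    rw [hP, mulVec_mulVec, ← Matrix.mul_assoc, Matrix.mul_nonsing_inv D hD, Matrix.one_mul]
  set v : ((Fin nN ⊕ Fin nM) ⊕ (Fin nS ⊕ Fin nS)) → ℝ :=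
    Sum.elim (Sum.elim xN xM) (Sum.elim (P *ᵥ xM) 0) with hv
  have hAv : A *ᵥ v = 0 := by
    rw [hA, hv]
    funext j
    rcases j with (j | j) <;> rcases j with (j | j) <;>
      simp only [fromBlocks_mulVec, Sum.elim_inl, Sum.elim_inr, Pi.add_apply,
        mulVec_zero, add_zero, Pi.zero_apply]
    · simpa [add_assoc] using congrFun e1 j
    · simpa using congrFun e2 j
    · simpa using congrFun e3 j
    · have e4j : ((D * P) *ᵥ xM) j = (M *ᵥ xM) j := by
        rw [← mulVec_mulVec]; exact congrFun e4 j
      simp only [Sum.elim_comp_inl, Sum.elim_comp_inr, zero_mulVec, neg_mulVec,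
        Pi.zero_apply, Pi.neg_apply, zero_add, add_zero]
      linarith [e4j, congrFun e4 j]
  have hinj : Function.Injective A.mulVec :=
    Matrix.mulVec_injective_iff_isUnit.mpr ((Matrix.isUnit_iff_isUnit_det A).mpr hAinv)
  have hv0 : v = 0 := hinj (by rw [hAv, mulVec_zero])
  apply hx
  rw [hxe]
  funext i
  cases i with
  | inl i => exact congrFun hv0 (Sum.inl (Sum.inl i))
  | inr i => exact congrFun hv0 (Sum.inl (Sum.inr i))
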